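/- arXiv:1606.09109 — 3 statements merged into one kernel-verified Lean document; each statement's English description precedes it below -/
import Mathlib

section
/- For every integer k, the matrix ((T S)^k S)^{-1}, where S = [[0,1],[-1,0]] and T = [[1,ℓ],[0,1]] with ℓ = 2 cos(π/q), equals the matrix [[s(k), s(k+1)],[s(k-1), s(k)]], where s(m) = sin(mπ/q)/sin(π/q). -/
open Matrix Real

/-- For every integer `k`, the matrix `(T S)^k S` (i.e. the inverse of
`g_{q,k} = ((T S)^k S)⁻¹`), regarded in `SL₂(ℝ)` up to sign, equals
`[[s k, s (k+1)], [s (k-1), s k]]` where `s m = sin(mπ/q)/sin(π/q)`. -/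
theorem stmt0 (q : ℕ) (hq : 3 ≤ q)
    (ℓ : ℝ) (hℓ : ℓ = 2 * Real.cos (Real.pi / q))
    (S T : Matrix.SpecialLinearGroup (Fin 2) ℝ)
    (hS : (S : Matrix (Fin 2) (Fin 2) ℝ) = !![0, 1; -1, 0])
    (hT : (T : Matrix (Fin 2) (Fin 2) ℝ) = !![1, ℓ; 0, 1])
    (s : ℤ → ℝ) (hs : ∀ m : ℤ, s m = Real.sin (m * Real.pi / q) / Real.sin (Real.pi / q))
    (k : ℤ) :
    ((((T * S) ^ k * S)⁻¹)⁻¹ : Matrix (Fin 2) (Fin 2) ℝ)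
        = !![s k, s (k + 1); s (k - 1), s k] ∨
    ((((T * S) ^ k * S)⁻¹)⁻¹ : Matrix (Fin 2) (Fin 2) ℝ)
        = -!![s k, s (k + 1); s (k - 1), s k] := by
  have hq1 : (1 : ℝ) < q := by
    have : (3 : ℝ) ≤ q := by exact_mod_cast hq
    linarith
  have hsin : 0 < Real.sin (Real.pi / q) := by
    apply Real.sin_pos_of_pos_of_lt_pi
    · positivity
    · exact div_lt_self Real.pi_pos hq1
  have hsne : Real.sin (Real.pi / q) ≠ 0 := ne_of_gt hsin
  -- the three-term recurrence for s
  have hrec : ∀ m : ℤ, s (m + 1) = ℓ * s m - s (m - 1) := by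
    intro m
    have h1 : Real.sin (((m + 1 : ℤ) : ℝ) * Real.pi / q)
        = 2 * Real.cos (Real.pi / q) * Real.sin ((m : ℝ) * Real.pi / q)
          - Real.sin (((m - 1 : ℤ) : ℝ) * Real.pi / q) := by
      push_cast
      have e1 : ((m : ℝ) + 1) * Real.pi / q = (m : ℝ) * Real.pi / q + Real.pi / q := by ring
      have e2 : ((m : ℝ) - 1) * Real.pi / q = (m : ℝ) * Real.pi / q - Real.pi / q := by ring
      rw [e1, e2, Real.sin_add, Real.sin_sub]
      ring
    rw [hs, hs, hs, hℓ, h1]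
    field_simp
  set M : ℤ → Matrix (Fin 2) (Fin 2) ℝ := fun m => !![s m, s (m + 1); s (m - 1), s m]
    with hM
  set A : Matrix (Fin 2) (Fin 2) ℝ := ((T : Matrix (Fin 2) (Fin 2) ℝ)
    * (S : Matrix (Fin 2) (Fin 2) ℝ)) with hA
  have hAeq : A = !![-ℓ, 1; -1, 0] := by
    rw [hA, hT, hS, Matrix.mul_fin_two]
    norm_num
  have hdetA : IsUnit A.det := by
    rw [hAeq, Matrix.det_fin_two_of]
    norm_num
  have hAinv : A⁻¹ = !![0, -1; 1, -ℓ] := by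
    apply Matrix.inv_eq_right_inv
    rw [hAeq, Matrix.mul_fin_two, Matrix.one_fin_two]
    norm_num
  have hAstep : ∀ m : ℤ, !![-ℓ, 1; -1, 0] * M m = -(M (m + 1)) := by
    intro m
    have e1 : s (m + 1) = ℓ * s m - s (m - 1) := hrec m
    have e2 : s (m + 2) = ℓ * s (m + 1) - s m := by
      have := hrec (m + 1)
      rwa [show m + 1 + 1 = m + 2 by ring, show m + 1 - 1 = m by ring] at this
    have hneg : -(M (m + 1)) = !![-s (m + 1), -s (m + 2); -s m, -s (m + 1)] := by
      simp only [hM]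
      rw [show m + 1 + 1 = m + 2 by ring, show m + 1 - 1 = m by ring]
      ext i j
      fin_cases i <;> fin_cases j <;> simp
    rw [hneg]
    simp only [hM, Matrix.mul_fin_two]
    rw [show -ℓ * s m + 1 * s (m - 1) = -s (m + 1) by rw [e1]; ring,
      show -ℓ * s (m + 1) + 1 * s m = -s (m + 2) by rw [e2]; ring,
      show -1 * s m + 0 * s (m - 1) = -s m by ring,
      show -1 * s (m + 1) + 0 * s m = -s (m + 1) by ring]
  have hBstep : ∀ m : ℤ, !![0, -1; 1, -ℓ] * M m = -(M (m - 1)) := by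
    intro m
    have e1 : s (m + 1) = ℓ * s m - s (m - 1) := hrec m
    have e3 : s m = ℓ * s (m - 1) - s (m - 2) := by
      have := hrec (m - 1)
      rwa [show m - 1 + 1 = m by ring, show m - 1 - 1 = m - 2 by ring] at this
    have hneg : -(M (m - 1)) = !![-s (m - 1), -s m; -s (m - 2), -s (m - 1)] := by
      simp only [hM]
      rw [show m - 1 + 1 = m by ring, show m - 1 - 1 = m - 2 by ring]
      ext i j
      fin_cases i <;> fin_cases j <;> simp
    rw [hneg]
    simp only [hM, Matrix.mul_fin_two]
    rw [show (0 : ℝ) * s m + -1 * s (m - 1) = -s (m - 1) by ring,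
      show (0 : ℝ) * s (m + 1) + -1 * s m = -s m by ring,
      show (1 : ℝ) * s m + -ℓ * s (m - 1) = -s (m - 2) by rw [e3]; ring,
      show (1 : ℝ) * s (m + 1) + -ℓ * s m = -s (m - 1) by rw [e1]; ring]
  have hs0 : s 0 = 0 := by
    rw [hs]; norm_num
  have hs1 : s 1 = 1 := by
    rw [hs]; push_cast; rw [one_mul]; exact div_self hsne
  have hsm1 : s (-1) = -1 := by
    rw [hs]
    have : ((-1 : ℤ) : ℝ) * Real.pi / q = -(Real.pi / q) := by push_cast; ring
    rw [this, Real.sin_neg, neg_div, div_self hsne]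
  have key : ∀ k : ℤ,
      A ^ k * (S : Matrix (Fin 2) (Fin 2) ℝ) = ((-1 : ℝ) ^ k) • M k := by
    intro k
    induction k using Int.induction_on with
    | zero =>
      simp only [zpow_zero, one_mul, one_smul, hS, hM]
      rw [show (0 : ℤ) + 1 = 1 by ring, show (0 : ℤ) - 1 = -1 by ring, hs0, hs1, hsm1]
    | succ i ih =>
      have hpow : A ^ ((i : ℤ) + 1) = A * A ^ (i : ℤ) := by
        rw [show (i : ℤ) + 1 = 1 + (i : ℤ) by ring, Matrix.zpow_one_add hdetA]
      rw [hpow, mul_assoc, ih, Matrix.mul_smul, hAeq, hAstep, smul_neg, ← neg_smul,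
        zpow_add_one₀ (by norm_num : (-1 : ℝ) ≠ 0), mul_neg_one]
    | pred i ih =>
      have hpow : A ^ (-(i : ℤ) - 1) = A⁻¹ * A ^ (-(i : ℤ)) := by
        rw [show -(i : ℤ) - 1 = -1 + -(i : ℤ) by ring, Matrix.zpow_add hdetA,
          Matrix.zpow_neg_one]
      rw [hpow, mul_assoc, ih, Matrix.mul_smul, hAinv, hBstep, smul_neg, ← neg_smul,
        zpow_sub_one₀ (by norm_num : (-1 : ℝ) ≠ 0)]
      norm_num
  have hdetS : IsUnit ((S : Matrix (Fin 2) (Fin 2) ℝ)).det := by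
    rw [hS, Matrix.det_fin_two_of]
    norm_num
  have hdet : IsUnit (A ^ k * (S : Matrix (Fin 2) (Fin 2) ℝ)).det := by
    rw [Matrix.det_mul]
    exact (hdetA.det_zpow k).mul hdetS
  rw [Matrix.nonsing_inv_nonsing_inv _ hdet, key k]
  rcases Int.even_or_odd k with he | ho
  · left
    rw [he.neg_one_zpow, one_smul]
  · right
    rw [ho.neg_one_zpow, neg_one_smul]
end

section
/- Let t ≠ 0 be a real number and ℓ > 0. Then limsup over x → ∞ and k → ∞ of |x^{it} − (x + kℓ)^{it}| equals 2; in particular, it does not converge to 0. Consequently, if c ∈ ℂ and a function F : (1,∞) → ℂ satisfies F(x+ℓ) = F(x) for all x and F(x) = c x^{it} + O(x^{−1/2}) as x → ∞, then c = 0. -/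
open Filter Real

private lemma stmt8_norm_one (t y : ℝ) : ‖Complex.exp (Complex.I * t * y)‖ = 1 := by
  have h : Complex.I * t * y = (t * y : ℝ) * Complex.I := by push_cast; ring
  rw [h, Complex.norm_exp_ofReal_mul_I]

/-- Key construction: points where the difference has norm exactly 2. -/
private lemma stmt8_key (t ℓ : ℝ) (ht : t ≠ 0) (hℓ : 0 < ℓ) :
    ∀ ε : ℝ, 0 < ε → ∀ x₀ : ℝ, ∀ k₀ : ℕ, ∃ x : ℝ, x₀ ≤ x ∧ ∃ k : ℕ, k₀ ≤ k ∧
      2 - ε < ‖Complex.exp (Complex.I * t * Real.log x)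
        - Complex.exp (Complex.I * t * Real.log (x + k * ℓ))‖ := by
  intro ε hε x₀ k₀
  set A : ℝ := Real.exp (π / |t|) - 1 with hAdef
  have hAt : 0 < π / |t| := div_pos Real.pi_pos (abs_pos.mpr ht)
  have hA : 0 < A := by
    have := Real.add_one_le_exp (π / |t|)
    simp only [hAdef]; linarith
  obtain ⟨M, hM⟩ := exists_nat_ge ((max x₀ 1) * A / ℓ)
  set k : ℕ := max k₀ (max M 1) with hkdef
  have hk1 : (1 : ℕ) ≤ k := le_trans (le_max_right M 1) (le_max_right _ _)
  have hkM : (M : ℝ) ≤ k := by exact_mod_cast le_trans (le_max_left M 1) (le_max_right _ _)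
  have hkpos : (0 : ℝ) < k := by exact_mod_cast Nat.lt_of_lt_of_le Nat.zero_lt_one hk1
  set x : ℝ := k * ℓ / A with hxdef
  have hxpos : 0 < x := div_pos (mul_pos hkpos hℓ) hA
  have hxge : x₀ ≤ x := by
    have h1 : (max x₀ 1) * A / ℓ ≤ (k : ℝ) := le_trans hM hkM
    have h2 : (max x₀ 1) ≤ x := by
      rw [hxdef, le_div_iff₀ hA]
      calc max x₀ 1 * A = (max x₀ 1 * A / ℓ) * ℓ := by field_simp
        _ ≤ (k : ℝ) * ℓ := by
            exact mul_le_mul_of_nonneg_right h1 hℓ.le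
    exact le_trans (le_max_left _ _) h2
  refine ⟨x, hxge, k, le_trans (le_max_left _ _) (le_refl k), ?_⟩
  have hsum : x + k * ℓ = x * Real.exp (π / |t|) := by
    have : x * A = k * ℓ := by rw [hxdef]; field_simp
    have hE : Real.exp (π / |t|) = A + 1 := by rw [hAdef]; ring
    rw [hE]; nlinarith
  have hlog : Real.log (x + k * ℓ) = Real.log x + π / |t| := by
    rw [hsum, Real.log_mul hxpos.ne' (Real.exp_ne_zero _), Real.log_exp]
  have hexp : Complex.exp (Complex.I * t * Real.log (x + k * ℓ))
      = - Complex.exp (Complex.I * t * Real.log x) := by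
    rw [hlog]
    have hsplit : Complex.I * t * ((Real.log x : ℝ) + (π / |t| : ℝ) : ℝ)
        = Complex.I * t * (Real.log x) + Complex.I * (t * (π / |t|) : ℝ) := by
      push_cast; ring
    rw [hsplit, Complex.exp_add]
    have hneg : Complex.exp (Complex.I * (t * (π / |t|) : ℝ)) = -1 := by
      rcases lt_or_gt_of_ne ht with htn | htp
      · have : |t| = -t := abs_of_neg htn
        rw [this]
        have h1 : (t * (π / -t) : ℝ) = -π := by
          rw [mul_div_assoc', div_eq_iff (neg_ne_zero.mpr ht)]; ring
        rw [h1]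
        push_cast
        rw [show Complex.I * -(π : ℂ) = -(π * Complex.I) by ring, Complex.exp_neg,
          Complex.exp_pi_mul_I]
        norm_num
      · have : |t| = t := abs_of_pos htp
        rw [this]
        have h1 : (t * (π / t) : ℝ) = π := by
          rw [mul_div_assoc', div_eq_iff ht]; ring
        rw [h1, show Complex.I * (π : ℝ) = (π : ℂ) * Complex.I by push_cast; ring,
          Complex.exp_pi_mul_I]
    rw [hneg]; ring
  rw [hexp, sub_neg_eq_add, show Complex.exp (Complex.I * t * Real.log x)
      + Complex.exp (Complex.I * t * Real.log x)
      = (2 : ℂ) * Complex.exp (Complex.I * t * Real.log x) by ring]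
  rw [norm_mul, stmt8_norm_one]
  simp only [Complex.norm_ofNat, mul_one]
  linarith

/-- For `t ≠ 0`, `ℓ > 0` the quantity `|x^{it} − (x+kℓ)^{it}|` (with
`x^{it} = exp(it log x)`) is at most `2` but does not tend to `0` as
`x → ∞`, `k → ∞`: its limsup equals `2`.  Consequently, if `F : (1,∞) → ℂ`
is `ℓ`-periodic and `F(x) = c x^{it} + O(x^{−1/2})` as `x → ∞`, then `c = 0`. -/
theorem stmt8 (t ℓ : ℝ) (ht : t ≠ 0) (hℓ : 0 < ℓ) (c : ℂ) (F : ℝ → ℂ)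
    (hper : ∀ x : ℝ, 1 < x → F (x + ℓ) = F x)
    (hasymp : (fun x : ℝ => F x - c * Complex.exp (Complex.I * t * Real.log x))
      =O[atTop] fun x : ℝ => x ^ (-(1 : ℝ) / 2)) :
    (∀ x k : ℝ, 0 < x →
        ‖Complex.exp (Complex.I * t * Real.log x)
          - Complex.exp (Complex.I * t * Real.log (x + k * ℓ))‖ ≤ 2) ∧
    (∀ ε : ℝ, 0 < ε → ∀ x₀ : ℝ, ∀ k₀ : ℕ, ∃ x : ℝ, x₀ ≤ x ∧ ∃ k : ℕ, k₀ ≤ k ∧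
        2 - ε < ‖Complex.exp (Complex.I * t * Real.log x)
          - Complex.exp (Complex.I * t * Real.log (x + k * ℓ))‖) ∧
    c = 0 := by
  refine ⟨?_, stmt8_key t ℓ ht hℓ, ?_⟩
  · intro x k hx
    calc ‖Complex.exp (Complex.I * t * Real.log x)
          - Complex.exp (Complex.I * t * Real.log (x + k * ℓ))‖
        ≤ ‖Complex.exp (Complex.I * t * Real.log x)‖
          + ‖Complex.exp (Complex.I * t * Real.log (x + k * ℓ))‖ := norm_sub_le _ _
      _ = 2 := by rw [stmt8_norm_one, stmt8_norm_one]; norm_num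
  -- now c = 0
  have hperN : ∀ (n : ℕ) (x : ℝ), 1 < x → F (x + n * ℓ) = F x := by
    intro n
    induction n with
    | zero => simp
    | succ n ih =>
      intro x hx
      have hnl : (0 : ℝ) ≤ (n : ℝ) * ℓ := by positivity
      have h1 : x + ((n : ℕ) + 1 : ℕ) * ℓ = (x + n * ℓ) + ℓ := by push_cast; ring
      rw [h1, hper _ (by linarith), ih x hx]
  by_contra hc
  have hc' : 0 < ‖c‖ := norm_pos_iff.mpr hc
  obtain ⟨C, hC⟩ := hasymp.bound
  rw [Filter.eventually_atTop] at hC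
  obtain ⟨x₁, hx₁⟩ := hC
  set D : ℝ := |C| + 1 with hDdef
  have hD : 0 < D := by positivity
  have hbound : ∀ x : ℝ, x₁ ≤ x → 0 < x →
      ‖F x - c * Complex.exp (Complex.I * t * Real.log x)‖ ≤ D * x ^ (-(1:ℝ)/2) := by
    intro x hx hx0
    have h1 := hx₁ x hx
    have h2 : ‖x ^ (-(1:ℝ)/2)‖ = x ^ (-(1:ℝ)/2) := by
      rw [Real.norm_eq_abs, abs_of_pos (Real.rpow_pos_of_pos hx0 _)]
    rw [h2] at h1
    have h3 : C * x ^ (-(1:ℝ)/2) ≤ D * x ^ (-(1:ℝ)/2) := by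
      apply mul_le_mul_of_nonneg_right _ (Real.rpow_pos_of_pos hx0 _).le
      rw [hDdef]
      calc C ≤ |C| := le_abs_self C
        _ ≤ |C| + 1 := by linarith
    linarith
  set x₀ : ℝ := max (max x₁ 2) ((2 * D / ‖c‖) ^ 2 + 1) with hx₀def
  obtain ⟨x, hxge, k, -, hk2⟩ := stmt8_key t ℓ ht hℓ 1 one_pos x₀ 0
  have hxx₁ : x₁ ≤ x := le_trans (le_trans (le_max_left _ _) (le_max_left _ _)) hxge
  have hx2 : (2 : ℝ) ≤ x := le_trans (le_trans (le_max_right _ _) (le_max_left _ _)) hxge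
  have hxsq : (2 * D / ‖c‖) ^ 2 + 1 ≤ x := le_trans (le_max_right _ _) hxge
  have hx0 : 0 < x := by linarith
  have hkl : (0 : ℝ) ≤ (k : ℝ) * ℓ := by positivity
  have hxk0 : 0 < x + k * ℓ := by linarith
  have hFper : F (x + k * ℓ) = F x := hperN k x (by linarith)
  have hb1 := hbound x hxx₁ hx0
  have hb2 := hbound (x + k * ℓ) (by linarith) hxk0
  rw [hFper] at hb2
  -- combine
  have hdiff : c * Complex.exp (Complex.I * t * Real.log x)
      - c * Complex.exp (Complex.I * t * Real.log (x + k * ℓ))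
      = (F x - c * Complex.exp (Complex.I * t * Real.log (x + k * ℓ)))
        - (F x - c * Complex.exp (Complex.I * t * Real.log x)) := by ring
  have hnd : ‖c‖ * ‖Complex.exp (Complex.I * t * Real.log x)
        - Complex.exp (Complex.I * t * Real.log (x + k * ℓ))‖
      ≤ D * x ^ (-(1:ℝ)/2) + D * (x + k * ℓ) ^ (-(1:ℝ)/2) := by
    rw [← norm_mul, mul_sub, hdiff]
    calc ‖(F x - c * Complex.exp (Complex.I * t * Real.log (x + k * ℓ)))
          - (F x - c * Complex.exp (Complex.I * t * Real.log x))‖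
        ≤ ‖F x - c * Complex.exp (Complex.I * t * Real.log (x + k * ℓ))‖
          + ‖F x - c * Complex.exp (Complex.I * t * Real.log x)‖ := norm_sub_le _ _
      _ ≤ D * x ^ (-(1:ℝ)/2) + D * (x + k * ℓ) ^ (-(1:ℝ)/2) := by linarith
  have hmono : (x + k * ℓ) ^ (-(1:ℝ)/2) ≤ x ^ (-(1:ℝ)/2) := by
    exact Real.rpow_le_rpow_of_nonpos hx0 (by linarith) (by norm_num)
  have hlow : 1 < ‖Complex.exp (Complex.I * t * Real.log x)
      - Complex.exp (Complex.I * t * Real.log (x + k * ℓ))‖ := by linarith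
  have hsmall : 2 * D * x ^ (-(1:ℝ)/2) < ‖c‖ := by
    have hxgt : (2 * D / ‖c‖) ^ 2 < x := by linarith
    have hsq : 2 * D / ‖c‖ < Real.sqrt x := by
      rw [show (2 * D / ‖c‖) = √((2 * D / ‖c‖)^2) from (Real.sqrt_sq (by positivity)).symm]
      exact Real.sqrt_lt_sqrt (by positivity) hxgt
    have hrp : x ^ (-(1:ℝ)/2) = (Real.sqrt x)⁻¹ := by
      rw [Real.sqrt_eq_rpow, ← Real.rpow_neg hx0.le]
      norm_num
    rw [hrp]
    have hs0 : 0 < Real.sqrt x := Real.sqrt_pos.mpr hx0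
    rw [div_lt_iff₀ hc'] at hsq
    calc 2 * D * (Real.sqrt x)⁻¹ < Real.sqrt x * ‖c‖ * (Real.sqrt x)⁻¹ := by
          apply mul_lt_mul_of_pos_right hsq (by positivity)
      _ = ‖c‖ := by field_simp
  have : ‖c‖ ≤ ‖c‖ * ‖Complex.exp (Complex.I * t * Real.log x)
      - Complex.exp (Complex.I * t * Real.log (x + k * ℓ))‖ := by nlinarith
  nlinarith
end

section
/- Let s ∈ ℂ and let Q_0 : (0,∞) → ℂ satisfy the invariance Q_0(x) = (ℓx+1)^{−2s} Q_0(x/(ℓx+1)) for all x > 0 (invariance under α_s(g_{−1}) with g_{−1}.x = x/(ℓx+1)), and suppose Q_0(x) = o(x^{−2Re s}) as x → 0^+. Then Q_0 ≡ 0. -/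
open Filter Real Complex

/-- If `Q₀ : (0,∞) → ℂ` is invariant under the weight-`s` action of
`g : x ↦ x/(ℓx+1)`, i.e. `Q₀(x) = (ℓx+1)^{−2s} Q₀(x/(ℓx+1))`, and
`Q₀(x) = o(x^{−2 Re s})` as `x → 0⁺`, then `Q₀ ≡ 0` on `(0,∞)`. -/
theorem stmt10 (ℓ : ℝ) (hℓ : 0 < ℓ) (s : ℂ) (Q₀ : ℝ → ℂ)
    (hinv : ∀ x : ℝ, 0 < x →
      Q₀ x = ((ℓ * x + 1 : ℝ) : ℂ) ^ (-(2 * s)) * Q₀ (x / (ℓ * x + 1)))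
    (hlittleo : (fun x : ℝ => Q₀ x)
      =o[nhdsWithin 0 (Set.Ioi 0)] fun x : ℝ => x ^ (-(2 * s.re))) :
    ∀ x : ℝ, 0 < x → Q₀ x = 0 := by
  intro x hx
  have hℓx : 0 < ℓ * x := by positivity
  -- iterated invariance
  have hiter : ∀ n : ℕ, Q₀ x = ((n * (ℓ * x) + 1 : ℝ) : ℂ) ^ (-(2 * s)) *
      Q₀ (x / (n * (ℓ * x) + 1)) := by
    intro n
    induction n with
    | zero => simp
    | succ n ih =>
      have hc : (0:ℝ) < (n : ℝ) * (ℓ * x) + 1 := by positivity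
      have hc' : (0:ℝ) < ((n:ℝ)+1) * (ℓ * x) + 1 := by positivity
      have hu : 0 < x / ((n:ℝ) * (ℓ * x) + 1) := div_pos hx hc
      push_cast
      rw [ih, hinv _ hu]
      have h1 : ℓ * (x / ((n:ℝ) * (ℓ * x) + 1)) + 1
          = (((n:ℝ)+1) * (ℓ * x) + 1) / ((n:ℝ) * (ℓ * x) + 1) := by
        field_simp; ring
      have h2 : x / ((n:ℝ) * (ℓ * x) + 1) / ((((n:ℝ)+1) * (ℓ * x) + 1) / ((n:ℝ) * (ℓ * x) + 1))
          = x / (((n:ℝ)+1) * (ℓ * x) + 1) := by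
        field_simp
      have h3 : ((n:ℝ) * (ℓ * x) + 1) * ((((n:ℝ)+1) * (ℓ * x) + 1) / ((n:ℝ) * (ℓ * x) + 1))
          = ((n:ℝ)+1) * (ℓ * x) + 1 := by
        field_simp
      rw [h1, h2, ← mul_assoc,
        ← Complex.mul_cpow_ofReal_nonneg hc.le (by positivity), ← Complex.ofReal_mul, h3]
      push_cast
      ring_nf
  have hx2 : (0:ℝ) < x ^ (-(2 * s.re)) := Real.rpow_pos_of_pos hx _
  have key : ∀ ε : ℝ, 0 < ε → ‖Q₀ x‖ ≤ ε * x ^ (-(2 * s.re)) := by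
    intro ε hε
    have hbound := hlittleo.def hε
    have hu : Tendsto (fun n : ℕ => x / ((n:ℝ) * (ℓ * x) + 1)) atTop
        (nhdsWithin 0 (Set.Ioi 0)) := by
      apply tendsto_nhdsWithin_of_tendsto_nhds_of_eventually_within
      · simpa using Tendsto.div_atTop (tendsto_const_nhds (x := x))
          (tendsto_atTop_add_const_right _ 1
            (Tendsto.atTop_mul_const hℓx tendsto_natCast_atTop_atTop))
      · exact Eventually.of_forall fun n => div_pos hx (by positivity)
    obtain ⟨n, hn⟩ := (hu.eventually hbound).exists
    set c : ℝ := (n:ℝ) * (ℓ * x) + 1 with hcdef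
    have hcpos : 0 < c := by positivity
    have hupos : 0 < x / c := div_pos hx hcpos
    have hre : (-(2*s)).re = -(2*s.re) := by simp
    have hcne : c ^ (-(2*s.re)) ≠ 0 := (Real.rpow_pos_of_pos hcpos _).ne'
    calc ‖Q₀ x‖ = c ^ (-(2*s.re)) * ‖Q₀ (x / c)‖ := by
          rw [hiter n, norm_mul,
            Complex.norm_cpow_eq_rpow_re_of_pos hcpos, hre]
      _ ≤ c ^ (-(2*s.re)) * (ε * ‖(x/c) ^ (-(2 * s.re))‖) :=
          mul_le_mul_of_nonneg_left hn (Real.rpow_nonneg hcpos.le _)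
      _ = ε * x ^ (-(2 * s.re)) := by
          rw [Real.norm_eq_abs, abs_of_pos (Real.rpow_pos_of_pos hupos _),
            Real.div_rpow hx.le hcpos.le]
          field_simp
  by_contra hne0
  have hpos : 0 < ‖Q₀ x‖ := norm_pos_iff.mpr hne0
  have hk := key (‖Q₀ x‖ / (2 * x ^ (-(2*s.re)))) (by positivity)
  have h2 : ‖Q₀ x‖ / (2 * x ^ (-(2*s.re))) * x ^ (-(2*s.re)) = ‖Q₀ x‖ / 2 := by
    field_simp
  rw [h2] at hk
  linarith
end
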